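/- Let G be a digraph and f a discrete Morse function on G. Then in any allowed elementary path v_0 ⋯ v_n in G, there is at most one index i with f(v_i) = 0. -/

import Mathlib

/-- A digraph: a vertex set together with an irreflexive edge relation supported on the
vertex set (edges are ordered pairs off the diagonal). -/
structure DiGraph (V : Type) where
  verts : Set V
  Edge : V → V → Prop
  edge_mem_left : ∀ u v, Edge u v → u ∈ verts
  edge_mem_right : ∀ u v, Edge u v → v ∈ verts
  edge_ne : ∀ u v, Edge u v → u ≠ v

variable {V : Type}

/-- An allowed elementary path: a nonempty list of vertices of `G` such that each
consecutive pair is a directed edge of `G`. -/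
def IsAllowed (G : DiGraph V) (p : List V) : Prop :=
  p ≠ [] ∧ (∀ v ∈ p, v ∈ G.verts) ∧ p.Chain' G.Edge

/-- `Del p q` : `p` is obtained from `q` by deleting one vertex. -/
def Del (p q : List V) : Prop := ∃ i < q.length, p = q.eraseIdx i

/-- Value of a function on vertices extended to a path: the sum over its vertices. -/
def fval (f : V → ℝ) (p : List V) : ℝ := (p.map f).sum

/-- A discrete Morse function on a digraph `G`: a nonnegative function on vertices such
that for every allowed elementary path `p` there is (i) at most one allowed elementary
path obtained from `p` by deleting one vertex with the same `f`-value, and (ii) at most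
one allowed elementary path obtained from `p` by inserting one vertex with the same
`f`-value. -/
def IsMorse (G : DiGraph V) (f : V → ℝ) : Prop :=
  (∀ v, 0 ≤ f v) ∧
  ∀ p, IsAllowed G p →
    ((∀ β β', IsAllowed G β → Del β p → fval f β = fval f p →
        IsAllowed G β' → Del β' p → fval f β' = fval f p → β = β') ∧
     (∀ α α', IsAllowed G α → Del p α → fval f α = fval f p →
        IsAllowed G α' → Del p α' → fval f α' = fval f p → α = α'))

/-- An allowed elementary path is critical if no allowed path obtained by deleting one
vertex has the same `f`-value, and no allowed path obtained by inserting one vertex has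
the same `f`-value. -/
def IsCritical (G : DiGraph V) (f : V → ℝ) (p : List V) : Prop :=
  (¬ ∃ β, IsAllowed G β ∧ Del β p ∧ fval f β = fval f p) ∧
  (¬ ∃ α, IsAllowed G α ∧ Del p α ∧ fval f α = fval f p)

/-- A directed loop: an allowed elementary path `v₀ v₁ ⋯ vₙ v₀` with `n ≥ 1`. -/
def IsLoop (G : DiGraph V) (p : List V) : Prop :=
  IsAllowed G p ∧ 3 ≤ p.length ∧ p.head? = p.getLast?

/-- A simplicial allowed elementary path: all vertices distinct. -/
def Simplicial (G : DiGraph V) (p : List V) : Prop := IsAllowed G p ∧ p.Nodup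

/-- A pair of the combinatorial discrete gradient vector field `M(G,f)`:
`β` is obtained from `α` by inserting one vertex, and `f(α) = f(β)`. -/
def MPair (G : DiGraph V) (f : V → ℝ) (α β : List V) : Prop :=
  IsAllowed G α ∧ IsAllowed G β ∧ Del α β ∧ fval f α = fval f β

/-- `H` is a sub-digraph of `G`. -/
def Subdigraph (H G : DiGraph V) : Prop :=
  H.verts ⊆ G.verts ∧ ∀ u v, H.Edge u v → G.Edge u v

/-- If `f` is a discrete Morse function on a digraph `G`, then any
allowed elementary path in `G` has at most one index at which `f` vanishes. -/
lemma key (G : DiGraph V) (f : V → ℝ) (hf : IsMorse G f)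
    (p : List V) (hp : IsAllowed G p)
    (i j : Fin p.length) (hij : i.1 < j.1)
    (hi : f (p.get i) = 0) (hj : f (p.get j) = 0) : False := by
  obtain ⟨hne, hmem, hch⟩ := hp
  set n := i.1 with hn
  set k := j.1 with hk
  have hkl : k < p.length := j.2
  set q : List V := (p.drop n).take (k - n + 1) with hq
  have hqinfix : q <:+: p := (List.take_prefix _ _).isInfix.trans (p.drop_suffix n).isInfix
  have hqlen : q.length = k - n + 1 := by
    simp [hq, List.length_take, List.length_drop]
    omega
  have hq0 : ∀ h0 : 0 < q.length, q[0] = p.get i := by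
    intro h0
    simp [hq, List.getElem_take, List.getElem_drop]
    rfl
  have hqlast : ∀ hl : k - n < q.length, q[k - n] = p.get j := by
    intro hl
    have : n + (k - n) = k := by omega
    simp [hq, List.getElem_take, List.getElem_drop, this]
    rfl
  -- destructure q
  have h2 : 2 ≤ q.length := by omega
  have hqne : q ≠ [] := by intro h; rw [h] at hqlen; simp at hqlen
  obtain ⟨x, r, hxr⟩ := List.exists_cons_of_ne_nil hqne
  have hrne : r ≠ [] := by
    intro h; rw [hxr, h] at h2; simp at h2
  have hx : x = p.get i := by
    have := hq0 (by omega)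
    simpa [hxr] using this
  have hlast : q.getLast (by simp [hxr]) = p.get j := by
    rw [List.getLast_eq_getElem]
    have h1 : q.length - 1 = k - n := by omega
    have h2' : k - n < q.length := by omega
    rw [show q[q.length - 1]'(by omega) = q[k - n]'h2' by congr 1]
    exact hqlast h2'
  -- q is allowed
  have hqallowed : IsAllowed G q := by
    refine ⟨by simp [hxr], fun v hv => hmem v (hqinfix.subset hv), hch.infix hqinfix⟩
  -- the two deletions
  have hdel1 : Del r q := ⟨0, by simp [hxr], by simp [hxr]⟩
  have hdel2 : Del q.dropLast q := by
    refine ⟨q.length - 1, by omega, ?_⟩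
    rw [List.dropLast_eq_eraseIdx (i := q.length - 1) (by omega)]
  have hrallowed : IsAllowed G r :=
    ⟨hrne, fun v hv => (hqallowed.2.1) v (by simp [hxr, hv]),
      (hqallowed.2.2.infix ⟨[x], [], by simp [hxr]⟩)⟩
  have hdallowed : IsAllowed G q.dropLast := by
    refine ⟨?_, fun v hv => hqallowed.2.1 v (List.dropLast_sublist q |>.subset hv),
      hqallowed.2.2.prefix (q.dropLast_prefix)⟩
    have : q.dropLast.length = q.length - 1 := by simp
    intro h; rw [h] at this; simp at this; omega
  -- fval equalities
  have hi' : f x = 0 := by rw [hx]; exact hi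
  have hfr : fval f r = fval f q := by
    simp [hxr, fval, hi']
  have hfd : fval f q.dropLast = fval f q := by
    have hqe : q = q.dropLast ++ [q.getLast (by simp [hxr])] :=
      (List.dropLast_append_getLast _).symm
    have hj' : f (q.getLast (by simp [hxr])) = 0 := by rw [hlast]; exact hj
    conv_rhs => rw [hqe]
    simp [fval, hj']
  have := (hf.2 q hqallowed).1 r q.dropLast hrallowed hdel1 hfr hdallowed hdel2 hfd
  -- now r = q.dropLast = x :: r.dropLast, so r.head? = some x
  have hdlc : q.dropLast = x :: r.dropLast := by
    rw [hxr]; exact List.dropLast_cons_of_ne_nil hrne ..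
  have hchq := hqallowed.2.2
  rw [hxr] at hchq
  have hhead : r.head? = some x := by rw [this, hdlc]; simp
  have hedge : G.Edge x x := (List.isChain_cons.1 hchq).1 x hhead
  exact G.edge_ne x x hedge rfl

theorem at_most_one_zero (G : DiGraph V) (f : V → ℝ) (hf : IsMorse G f)
    (p : List V) (hp : IsAllowed G p) :
    ∀ i j : Fin p.length, f (p.get i) = 0 → f (p.get j) = 0 → i = j := by
  intro i j hi hj
  rcases lt_trichotomy i.1 j.1 with h | h | h
  · exact absurd (key G f hf p hp i j h hi hj) id
  · exact Fin.ext h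
  · exact absurd (key G f hf p hp j i h hj hi) id
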